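/- If the group G has finite exponent e (that is, g^e = 1 for all g ∈ G, e > 0), then for every element x of the subgroup R of the weak commutativity group χ(G) one has x^e ∈ L₁₂ (i.e. the exponent of R/L₁₂ divides e). -/

import Mathlib

open Subgroup
open scoped commutatorElement

/-- The weak commutativity relations inside the free product `G ∗ G`. -/
def chiRel (G : Type*) [Group G] : Subgroup (Monoid.Coprod G G) :=
  Subgroup.normalClosure
    {x | ∃ g : G, x = Monoid.Coprod.inl g * Monoid.Coprod.inr g *
      (Monoid.Coprod.inl g)⁻¹ * (Monoid.Coprod.inr g)⁻¹}

instance chiRel_normal (G : Type*) [Group G] : (chiRel G).Normal :=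
  Subgroup.normalClosure_normal

/-- The weak commutativity group `χ(G)`. -/
def Chi (G : Type*) [Group G] : Type _ := Monoid.Coprod G G ⧸ chiRel G

instance (G : Type*) [Group G] : Group (Chi G) :=
  inferInstanceAs (Group (Monoid.Coprod G G ⧸ chiRel G))

/-- The canonical map `G → χ(G)`, `g ↦ g`. -/
def chiIota1 (G : Type*) [Group G] : G →* Chi G :=
  (QuotientGroup.mk' (chiRel G)).comp Monoid.Coprod.inl

/-- The canonical map `G → χ(G)`, `g ↦ g^φ`. -/
def chiIota2 (G : Type*) [Group G] : G →* Chi G :=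
  (QuotientGroup.mk' (chiRel G)).comp Monoid.Coprod.inr

/-- `G₁ ≤ χ(G)`. -/
def chiG1 (G : Type*) [Group G] : Subgroup (Chi G) := (chiIota1 G).range

/-- `G₂ = G^φ ≤ χ(G)`. -/
def chiG2 (G : Type*) [Group G] : Subgroup (Chi G) := (chiIota2 G).range

/-- `L = ⟨g⁻¹ g^φ : g ∈ G⟩`. -/
def chiL (G : Type*) [Group G] : Subgroup (Chi G) :=
  Subgroup.closure {x | ∃ g : G, x = (chiIota1 G g)⁻¹ * chiIota2 G g}

/-- `D = ⁅G₁, G₂⁆`. -/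
def chiD (G : Type*) [Group G] : Subgroup (Chi G) := ⁅chiG1 G, chiG2 G⁆

/-- `L₁ = ⁅L, G₁⁆`. -/
def chiL1 (G : Type*) [Group G] : Subgroup (Chi G) := ⁅chiL G, chiG1 G⁆

/-- `L₂ = ⁅L, G₂⁆`. -/
def chiL2 (G : Type*) [Group G] : Subgroup (Chi G) := ⁅chiL G, chiG2 G⁆

/-- `R = ⁅⁅G₁, L⁆, G₂⁆`. -/
def chiR (G : Type*) [Group G] : Subgroup (Chi G) := ⁅⁅chiG1 G, chiL G⁆, chiG2 G⁆

/-- `L₁₂ = ⁅L₁, L₂⁆`. -/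
def chiL12 (G : Type*) [Group G] : Subgroup (Chi G) := ⁅chiL1 G, chiL2 G⁆

section ChiAux

variable {G : Type*} [Group G]

namespace ChiAux

/-- abbreviation for the first copy -/
abbrev S (g : G) : Chi G := chiIota1 G g
/-- abbreviation for the second copy -/
abbrev T (g : G) : Chi G := chiIota2 G g
/-- the element g⁻¹ g^φ -/
def u (g : G) : Chi G := (chiIota1 G g)⁻¹ * chiIota2 G g

lemma Smul (a b : G) : S (a * b) = (S a : Chi G) * S b := map_mul _ _ _
lemma Sinv (a : G) : S (a⁻¹) = (S a : Chi G)⁻¹ := map_inv _ _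
lemma Tmul (a b : G) : T (a * b) = (T a : Chi G) * T b := map_mul _ _ _
lemma Tinv (a : G) : T (a⁻¹) = (T a : Chi G)⁻¹ := map_inv _ _

lemma chi_comm (g : G) : Commute (S g : Chi G) (T g) := by
  rw [← commutatorElement_eq_one_iff_commute]
  have h : ⁅(Monoid.Coprod.inl g : Monoid.Coprod G G), (Monoid.Coprod.inr g : Monoid.Coprod G G)⁆ ∈ chiRel G :=
    Subgroup.subset_normalClosure ⟨g, commutatorElement_def _ _⟩
  have : (QuotientGroup.mk' (chiRel G)) ⁅(Monoid.Coprod.inl g : Monoid.Coprod G G), (Monoid.Coprod.inr g : Monoid.Coprod G G)⁆ = 1 := by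
    rw [← MonoidHom.mem_ker, QuotientGroup.ker_mk']; exact h
  rw [map_commutatorElement] at this
  exact this

lemma SmemG1 (a : G) : (S a : Chi G) ∈ chiG1 G := ⟨a, rfl⟩
lemma TmemG2 (a : G) : (T a : Chi G) ∈ chiG2 G := ⟨a, rfl⟩
lemma u_mem (g : G) : u g ∈ chiL G := Subgroup.subset_closure ⟨g, rfl⟩

lemma iota2_eq (g : G) : (T g : Chi G) = S g * u g := by
  unfold u; group

lemma comm_S_u (g : G) : Commute (S g : Chi G) (u g) := by
  unfold u
  exact ((Commute.refl (S g : Chi G)).inv_right).mul_right (chi_comm g)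

lemma comm_T_u (g : G) : Commute (T g : Chi G) (u g) := by
  unfold u
  exact ((chi_comm g).symm.inv_right).mul_right (Commute.refl _)

lemma u_one : (u (1 : G) : Chi G) = 1 := by
  unfold u; rw [map_one, map_one]; group

lemma u_mul (a b : G) : u (a * b) = (S b : Chi G)⁻¹ * u a * S b * u b := by
  unfold u; rw [map_mul, map_mul]; group

lemma u_pow (g : G) : ∀ n : ℕ, u (g ^ n) = (u g : Chi G) ^ n := by
  intro n
  induction n with
  | zero => simp [u_one]
  | succ n ih =>
    rw [pow_succ, u_mul, ih]
    have h : (S g : Chi G)⁻¹ * (u g) ^ n * S g = (u g) ^ n := by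
      have hc := (comm_S_u g).pow_right n
      rw [mul_assoc, ← hc.eq, ← mul_assoc, inv_mul_cancel, one_mul]
    rw [h, pow_succ]

end ChiAux
end ChiAux
namespace ChiAux
section Ident
variable {α : Type*} [Group α]

lemma I1 (x y z : α) : ⁅x*y, z⁆ = x * ⁅y,z⁆ * x⁻¹ * ⁅x,z⁆ := by
  simp only [commutatorElement_def]; group

lemma I1' (x y z : α) : x * ⁅y,z⁆ * x⁻¹ = ⁅x*y, z⁆ * ⁅x,z⁆⁻¹ := by
  simp only [commutatorElement_def]; group

lemma I2 (x y z : α) : ⁅x, y*z⁆ = ⁅x,y⁆ * (y * ⁅x,z⁆ * y⁻¹) := by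
  simp only [commutatorElement_def]; group

lemma I2' (x y z : α) : y * ⁅x,z⁆ * y⁻¹ = ⁅x,y⁆⁻¹ * ⁅x, y*z⁆ := by
  simp only [commutatorElement_def]; group

lemma I3 (x z : α) : ⁅x⁻¹, z⁆ = x⁻¹ * ⁅x,z⁆⁻¹ * x := by
  simp only [commutatorElement_def]; group

lemma I4 (l w t : α) : ⁅l*w*l⁻¹, t⁆ = l * ⁅w, l⁻¹*t*l⁆ * l⁻¹ := by
  simp only [commutatorElement_def]; group

lemma I5 (l t : α) : l⁻¹ * t * l = t * ⁅t⁻¹, l⁻¹⁆ := by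
  simp only [commutatorElement_def]; group

lemma I5' (l t : α) : l * t * l⁻¹ = t * ⁅t⁻¹, l⁆ := by
  simp only [commutatorElement_def]; group

lemma conj_eq_of_commute {x z : α} (h : Commute x z) : z⁻¹ * x * z = x := by
  rw [mul_assoc, h.eq, ← mul_assoc, inv_mul_cancel, one_mul]

lemma conj_eq_of_commute' {x z : α} (h : Commute x z) : z * x * z⁻¹ = x := by
  rw [mul_assoc, h.inv_right.eq, ← mul_assoc, mul_inv_cancel, one_mul]

lemma commute_conj {y z l : α} (h : Commute y (z * l * z⁻¹)) : Commute (z⁻¹ * y * z) l := by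
  have h' : y * (z*l*z⁻¹) = (z*l*z⁻¹) * y := h
  show (z⁻¹*y*z) * l = l * (z⁻¹*y*z)
  calc (z⁻¹*y*z)*l = z⁻¹ * (y * (z*l*z⁻¹)) * z := by group
    _ = z⁻¹ * ((z*l*z⁻¹) * y) * z := by rw [h']
    _ = l * (z⁻¹*y*z) := by group

lemma conj_mem_commutator_left {H K : Subgroup α} {h : α} (hh : h ∈ H) {y : α}
    (hy : y ∈ ⁅H,K⁆) : h * y * h⁻¹ ∈ ⁅H,K⁆ := by
  rw [Subgroup.commutator_def] at hy
  induction hy using Subgroup.closure_induction with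
  | mem x hx =>
    obtain ⟨g₁, hg₁, g₂, hg₂, rfl⟩ := hx
    rw [I1']
    exact mul_mem (Subgroup.commutator_mem_commutator (mul_mem hh hg₁) hg₂)
      (inv_mem (Subgroup.commutator_mem_commutator hh hg₂))
  | one => simpa using one_mem _
  | mul x y hx hy ihx ihy =>
    have : h * (x*y) * h⁻¹ = (h*x*h⁻¹) * (h*y*h⁻¹) := by group
    rw [this]; exact mul_mem ihx ihy
  | inv x hx ihx =>
    have : h * x⁻¹ * h⁻¹ = (h*x*h⁻¹)⁻¹ := by group
    rw [this]; exact inv_mem ihx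

lemma conj_mem_commutator_right {H K : Subgroup α} {k : α} (hk : k ∈ K) {y : α}
    (hy : y ∈ ⁅H,K⁆) : k * y * k⁻¹ ∈ ⁅H,K⁆ := by
  rw [Subgroup.commutator_def] at hy
  induction hy using Subgroup.closure_induction with
  | mem x hx =>
    obtain ⟨g₁, hg₁, g₂, hg₂, rfl⟩ := hx
    rw [I2']
    exact mul_mem (inv_mem (Subgroup.commutator_mem_commutator hg₁ hk))
      (Subgroup.commutator_mem_commutator hg₁ (mul_mem hk hg₂))
  | one => simpa using one_mem _
  | mul x y hx hy ihx ihy =>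
    have : k * (x*y) * k⁻¹ = (k*x*k⁻¹) * (k*y*k⁻¹) := by group
    rw [this]; exact mul_mem ihx ihy
  | inv x hx ihx =>
    have : k * x⁻¹ * k⁻¹ = (k*x*k⁻¹)⁻¹ := by group
    rw [this]; exact inv_mem ihx

lemma commutator_mem_self {H : Subgroup α} {x y : α} (hx : x ∈ H) (hy : y ∈ H) :
    ⁅x, y⁆ ∈ H := by
  rw [commutatorElement_def]
  exact mul_mem (mul_mem (mul_mem hx hy) (inv_mem hx)) (inv_mem hy)

end Ident

variable {G : Type*} [Group G]

lemma chi_top : Subgroup.closure (Set.range (chiIota1 G) ∪ Set.range (chiIota2 G)) = ⊤ := by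
  rw [eq_top_iff]
  intro x _
  obtain ⟨y, rfl⟩ := QuotientGroup.mk'_surjective (chiRel G) x
  induction y using Monoid.Coprod.induction_on with
  | inl m => exact Subgroup.subset_closure (Or.inl ⟨m, rfl⟩)
  | inr n => exact Subgroup.subset_closure (Or.inr ⟨n, rfl⟩)
  | mul a b ha hb =>
    rw [map_mul]
    exact mul_mem (ha (Subgroup.mem_top _)) (hb (Subgroup.mem_top _))

lemma normal_of (H : Subgroup (Chi G))
    (h1 : ∀ (g : G) (y : Chi G), y ∈ H → S g * y * (S g : Chi G)⁻¹ ∈ H)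
    (h2 : ∀ (g : G) (y : Chi G), y ∈ H → T g * y * (T g : Chi G)⁻¹ ∈ H) : H.Normal := by
  rw [← Subgroup.normalizer_eq_top_iff, eq_top_iff, ← chi_top, Subgroup.closure_le]
  rintro x (⟨g, rfl⟩ | ⟨g, rfl⟩) <;> rw [SetLike.mem_coe, Subgroup.mem_normalizer_iff] <;>
    intro y <;> constructor
  · exact h1 g y
  · intro hy
    have h' := h1 g⁻¹ _ hy
    rw [Sinv] at h'
    have e : (S g : Chi G)⁻¹ * (S g * y * (S g)⁻¹) * ((S g)⁻¹)⁻¹ = y := by group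
    rwa [e] at h'
  · exact h2 g y
  · intro hy
    have h' := h2 g⁻¹ _ hy
    rw [Tinv] at h'
    have e : (T g : Chi G)⁻¹ * (T g * y * (T g)⁻¹) * ((T g)⁻¹)⁻¹ = y := by group
    rwa [e] at h'

lemma conjS_L : ∀ (h : G) (y : Chi G), y ∈ chiL G → S h * y * (S h : Chi G)⁻¹ ∈ chiL G := by
  intro h y hy
  induction hy using Subgroup.closure_induction with
  | mem x hx =>
    obtain ⟨g, rfl⟩ := hx
    show (S h : Chi G) * u g * (S h)⁻¹ ∈ chiL G
    have e : (S h : Chi G) * u g * (S h)⁻¹ = u (g * h⁻¹) * (u h⁻¹ : Chi G)⁻¹ := by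
      rw [u_mul g h⁻¹, Sinv]; group
    rw [e]; exact mul_mem (u_mem _) (inv_mem (u_mem _))
  | one => simpa using one_mem _
  | mul x y hx hy ihx ihy =>
    have e : (S h : Chi G) * (x*y) * (S h)⁻¹ = (S h * x * (S h)⁻¹) * (S h * y * (S h)⁻¹) := by
      group
    rw [e]; exact mul_mem ihx ihy
  | inv x hx ihx =>
    have e : (S h : Chi G) * x⁻¹ * (S h)⁻¹ = (S h * x * (S h)⁻¹)⁻¹ := by group
    rw [e]; exact inv_mem ihx

lemma conjT_L : ∀ (h : G) (y : Chi G), y ∈ chiL G → T h * y * (T h : Chi G)⁻¹ ∈ chiL G := by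
  intro h y hy
  have e : (T h : Chi G) * y * (T h)⁻¹ = S h * (u h * y * (u h)⁻¹) * (S h)⁻¹ := by
    rw [iota2_eq]; group
  rw [e]
  exact conjS_L h _ (mul_mem (mul_mem (u_mem h) hy) (inv_mem (u_mem h)))

lemma chiL_normal : (chiL G).Normal := normal_of _ conjS_L conjT_L

lemma chiD_normal : (chiD G).Normal := by
  refine normal_of _ ?_ ?_
  · intro g y hy; exact conj_mem_commutator_left (SmemG1 g) hy
  · intro g y hy; exact conj_mem_commutator_right (TmemG2 g) hy

lemma chiL1_normal : (chiL1 G).Normal := by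
  refine normal_of _ ?_ ?_
  · intro g y hy; exact conj_mem_commutator_right (SmemG1 g) hy
  · intro g y hy
    have e : (T g : Chi G) * y * (T g)⁻¹ = S g * (u g * y * (u g)⁻¹) * (S g)⁻¹ := by
      rw [iota2_eq]; group
    rw [e]
    exact conj_mem_commutator_right (SmemG1 g)
      (conj_mem_commutator_left (u_mem g) hy)

lemma chiL2_normal : (chiL2 G).Normal := by
  refine normal_of _ ?_ ?_
  · intro g y hy
    have e : (S g : Chi G) * y * (S g)⁻¹ = T g * ((u g)⁻¹ * y * ((u g)⁻¹)⁻¹) * (T g)⁻¹ := by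
      rw [iota2_eq]; group
    rw [e]
    exact conj_mem_commutator_right (TmemG2 g)
      (conj_mem_commutator_left (inv_mem (u_mem g)) hy)
  · intro g y hy; exact conj_mem_commutator_right (TmemG2 g) hy

lemma chiL12_normal : (chiL12 G).Normal := by
  haveI := chiL1_normal (G := G)
  haveI := chiL2_normal (G := G)
  exact Subgroup.commutator_normal _ _

lemma chiL1_le_chiL : chiL1 G ≤ chiL G := by
  haveI := chiL_normal (G := G)
  exact Subgroup.commutator_le_left _ _

lemma chiL2_le_chiL : chiL2 G ≤ chiL G := by
  haveI := chiL_normal (G := G)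
  exact Subgroup.commutator_le_left _ _

end ChiAux
namespace ChiAux

variable {G : Type*} [Group G]

lemma Qm (a b : G) : ⁅(S a : Chi G), T b⁆ = (u a)⁻¹ * ⁅(T a : Chi G), S b⁆ * (u a) := by
  have h0 : ⁅(S a : Chi G) * S b, T a * T b⁆ = 1 := by
    rw [← Smul, ← Tmul]
    exact commutatorElement_eq_one_iff_commute.mpr (chi_comm (a*b))
  have ha : ⁅(S a : Chi G), T a⁆ = 1 := commutatorElement_eq_one_iff_commute.mpr (chi_comm a)
  have hb : ⁅(S b : Chi G), T b⁆ = 1 := commutatorElement_eq_one_iff_commute.mpr (chi_comm b)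
  have E : (S a : Chi G) * ⁅(S b : Chi G), T a⁆ * (S a)⁻¹ * (T a * ⁅(S a : Chi G), T b⁆ * (T a)⁻¹) = 1 := by
    calc (S a : Chi G) * ⁅(S b : Chi G), T a⁆ * (S a)⁻¹ * (T a * ⁅(S a : Chi G), T b⁆ * (T a)⁻¹)
        = (S a : Chi G) * (⁅(S b : Chi G), T a⁆ * (T a * ⁅(S b : Chi G), T b⁆ * (T a)⁻¹)) * (S a)⁻¹
            * (⁅(S a : Chi G), T a⁆ * (T a * ⁅(S a : Chi G), T b⁆ * (T a)⁻¹)) := by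
          rw [ha, hb]; group
      _ = ⁅(S a : Chi G) * S b, T a * T b⁆ := by
          simp only [commutatorElement_def]; group
      _ = 1 := h0
  have h1 : (T a : Chi G) * ⁅(S a : Chi G), T b⁆ * (T a)⁻¹
      = ((S a : Chi G) * ⁅(S b : Chi G), T a⁆ * (S a)⁻¹)⁻¹ :=
    eq_inv_of_mul_eq_one_right E
  have h2 : ⁅(S a : Chi G), T b⁆
      = (T a : Chi G)⁻¹ * ((S a : Chi G) * ⁅(S b : Chi G), T a⁆ * (S a)⁻¹)⁻¹ * T a := by
    rw [← h1]; group
  calc ⁅(S a : Chi G), T b⁆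
      = (T a : Chi G)⁻¹ * ((S a : Chi G) * ⁅(S b : Chi G), T a⁆ * (S a)⁻¹)⁻¹ * T a := h2
    _ = (u a)⁻¹ * ⁅(S b : Chi G), T a⁆⁻¹ * (u a) := by unfold u; group
    _ = (u a)⁻¹ * ⁅(T a : Chi G), S b⁆ * (u a) := by rw [commutatorElement_inv]

lemma E4comm (a b c : G) :
    Commute ⁅(T a : Chi G), S c⁆ (u a * (u (a*b))⁻¹) := by
  set y := ⁅(T a : Chi G), S c⁆ with hy
  -- main expanded equation
  have lhsEq : ⁅(S a : Chi G), T (b*c)⁆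
      = ((u a)⁻¹ * ⁅(T a : Chi G), S b⁆ * u a) *
        (T b * ((u a)⁻¹ * y * u a) * (T b)⁻¹) := by
    rw [Tmul, I2, Qm a b, Qm a c]
  have rhsEq : ⁅(S a : Chi G), T (b*c)⁆
      = (u a)⁻¹ * (⁅(T a : Chi G), S b⁆ * (S b * y * (S b)⁻¹)) * u a := by
    rw [Qm a (b*c), Smul, I2]
  have h3 : ((u a)⁻¹ * ⁅(T a : Chi G), S b⁆ * u a) * (T b * ((u a)⁻¹ * y * u a) * (T b)⁻¹)
      = (u a)⁻¹ * (⁅(T a : Chi G), S b⁆ * (S b * y * (S b)⁻¹)) * u a := by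
    rw [← lhsEq, ← rhsEq]
  have h5 : ((u a)⁻¹ * ⁅(T a : Chi G), S b⁆) * (u a * T b * (u a)⁻¹ * y * (u a) * (T b)⁻¹)
      = ((u a)⁻¹ * ⁅(T a : Chi G), S b⁆) * (S b * y * (S b)⁻¹ * u a) := by
    calc ((u a)⁻¹ * ⁅(T a : Chi G), S b⁆) * (u a * T b * (u a)⁻¹ * y * (u a) * (T b)⁻¹)
        = ((u a)⁻¹ * ⁅(T a : Chi G), S b⁆ * u a) * (T b * ((u a)⁻¹ * y * u a) * (T b)⁻¹) := by
          group
      _ = (u a)⁻¹ * (⁅(T a : Chi G), S b⁆ * (S b * y * (S b)⁻¹)) * u a := h3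
      _ = ((u a)⁻¹ * ⁅(T a : Chi G), S b⁆) * (S b * y * (S b)⁻¹ * u a) := by group
  have hstar : u a * T b * (u a)⁻¹ * y * (u a) * (T b)⁻¹ = S b * y * (S b)⁻¹ * u a :=
    mul_left_cancel h5
  have hz : u a * (u (a*b))⁻¹ = u a * (T b : Chi G)⁻¹ * (u a)⁻¹ * S b := by
    rw [u_mul, iota2_eq]; group
  rw [hz]
  show y * (u a * (T b : Chi G)⁻¹ * (u a)⁻¹ * S b) = (u a * (T b : Chi G)⁻¹ * (u a)⁻¹ * S b) * y
  calc y * (u a * (T b : Chi G)⁻¹ * (u a)⁻¹ * S b)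
      = (u a * (T b : Chi G)⁻¹ * (u a)⁻¹) * (u a * T b * (u a)⁻¹ * y * (u a) * (T b)⁻¹)
          * ((u a)⁻¹ * S b) := by group
    _ = (u a * (T b : Chi G)⁻¹ * (u a)⁻¹) * (S b * y * (S b)⁻¹ * u a) * ((u a)⁻¹ * S b) := by
        rw [hstar]
    _ = (u a * (T b : Chi G)⁻¹ * (u a)⁻¹ * S b) * y := by group

lemma commute_TS_u (a c x : G) : Commute ⁅(T a : Chi G), S c⁆ (u x) := by
  have h1 : Commute ⁅(T a : Chi G), S c⁆ (u a) := by
    have := E4comm a a⁻¹ c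
    rw [mul_inv_cancel, u_one, inv_one, mul_one] at this
    exact this
  have h2 := E4comm a (a⁻¹ * x) c
  rw [mul_inv_cancel_left] at h2
  have h4 : Commute ⁅(T a : Chi G), S c⁆ ((u a)⁻¹ * (u a * (u x)⁻¹)) :=
    h1.inv_right.mul_right h2
  rw [inv_mul_cancel_left] at h4
  simpa using h4.inv_right

end ChiAux
namespace ChiAux

variable {G : Type*} [Group G]

lemma commute_TS_L (a c : G) {l : Chi G} (hl : l ∈ chiL G) :
    Commute ⁅(T a : Chi G), S c⁆ l := by
  induction hl using Subgroup.closure_induction with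
  | mem x hx => obtain ⟨g, rfl⟩ := hx; exact commute_TS_u a c g
  | one => exact Commute.one_right _
  | mul x y hx hy ihx ihy => exact ihx.mul_right ihy
  | inv x hx ihx => exact ihx.inv_right

lemma commute_ST_L (a b : G) {l : Chi G} (hl : l ∈ chiL G) :
    Commute ⁅(S a : Chi G), T b⁆ l := by
  rw [Qm]
  apply commute_conj
  exact commute_TS_L a b (mul_mem (mul_mem (u_mem a) hl) (inv_mem (u_mem a)))

lemma hDL : ∀ d ∈ chiD G, ∀ l ∈ chiL G, Commute d l := by
  have hcent : chiD G ≤ Subgroup.centralizer (chiL G : Set (Chi G)) := by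
    refine Subgroup.commutator_le.mpr ?_
    rintro x ⟨a, rfl⟩ y ⟨b, rfl⟩
    rw [Subgroup.mem_centralizer_iff]
    intro l hl
    exact ((commute_ST_L a b hl).symm).eq
  intro d hd l hl
  exact (Subgroup.mem_centralizer_iff.mp (hcent hd) l hl).symm

lemma chiM_normal : (chiG1 G ⊔ chiD G).Normal := by
  haveI hDn := chiD_normal (G := G)
  refine normal_of _ ?_ ?_
  · intro g z hz
    have hle : (chiG1 G ⊔ chiD G) ≤
        Subgroup.comap ((MulAut.conj (S g : Chi G)).toMonoidHom) (chiG1 G ⊔ chiD G) := by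
      refine sup_le ?_ ?_
      · rintro w ⟨m, rfl⟩
        simp only [Subgroup.mem_comap, MulEquiv.coe_toMonoidHom, MulAut.conj_apply]
        have e : (S g : Chi G) * S m * (S g)⁻¹ = S (g * m * g⁻¹) := by
          rw [Smul, Smul, Sinv]
        rw [e]
        exact Subgroup.mem_sup_left (SmemG1 _)
      · intro w hw
        simp only [Subgroup.mem_comap, MulEquiv.coe_toMonoidHom, MulAut.conj_apply]
        exact Subgroup.mem_sup_right (hDn.conj_mem _ hw _)
    simpa only [Subgroup.mem_comap, MulEquiv.coe_toMonoidHom, MulAut.conj_apply] using hle hz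
  · intro g z hz
    have hle : (chiG1 G ⊔ chiD G) ≤
        Subgroup.comap ((MulAut.conj (T g : Chi G)).toMonoidHom) (chiG1 G ⊔ chiD G) := by
      refine sup_le ?_ ?_
      · rintro w ⟨m, rfl⟩
        simp only [Subgroup.mem_comap, MulEquiv.coe_toMonoidHom, MulAut.conj_apply]
        have e : (T g : Chi G) * S m * (T g)⁻¹ = S m * ⁅(S m : Chi G)⁻¹, T g⁆ := by
          simp only [commutatorElement_def]; group
        rw [e]
        exact mul_mem (Subgroup.mem_sup_left (SmemG1 m))
          (Subgroup.mem_sup_right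
            (Subgroup.commutator_mem_commutator (inv_mem (SmemG1 m)) (TmemG2 g)))
      · intro w hw
        simp only [Subgroup.mem_comap, MulEquiv.coe_toMonoidHom, MulAut.conj_apply]
        exact Subgroup.mem_sup_right (hDn.conj_mem _ hw _)
    simpa only [Subgroup.mem_comap, MulEquiv.coe_toMonoidHom, MulAut.conj_apply] using hle hz

lemma hL1_le_M : chiL1 G ≤ chiG1 G ⊔ chiD G := by
  haveI hDn := chiD_normal (G := G)
  haveI hMn := chiM_normal (G := G)
  refine Subgroup.commutator_le.mpr ?_
  intro l hl x hx
  obtain ⟨a, rfl⟩ := hx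
  induction hl using Subgroup.closure_induction with
  | mem w hw =>
    obtain ⟨g, rfl⟩ := hw
    show ⁅(u g : Chi G), S a⁆ ∈ chiG1 G ⊔ chiD G
    rw [show (u g : Chi G) = (S g)⁻¹ * T g from rfl, I1, inv_inv]
    have h1 : (S g : Chi G)⁻¹ * ⁅(T g : Chi G), S a⁆ * S g ∈ chiD G := by
      have hmem : ⁅(T g : Chi G), S a⁆ ∈ chiD G := by
        rw [← commutatorElement_inv]
        exact inv_mem (Subgroup.commutator_mem_commutator (SmemG1 a) (TmemG2 g))
      have e2 : (S g : Chi G)⁻¹ * ⁅(T g : Chi G), S a⁆ * S g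
          = (S g)⁻¹ * ⁅(T g : Chi G), S a⁆ * ((S g : Chi G)⁻¹)⁻¹ := by group
      rw [e2]
      exact hDn.conj_mem _ hmem _
    have h2 : ⁅(S g : Chi G)⁻¹, S a⁆ ∈ chiG1 G :=
      commutator_mem_self (inv_mem (SmemG1 g)) (SmemG1 a)
    exact mul_mem (Subgroup.mem_sup_right h1) (Subgroup.mem_sup_left h2)
  | one => rw [commutatorElement_one_left]; exact one_mem _
  | mul x y hx hy ihx ihy =>
    rw [I1]
    have e : (x : Chi G) * ⁅y, S a⁆ * x⁻¹ * ⁅x, S a⁆ = (x * ⁅y, S a⁆ * x⁻¹) * ⁅x, S a⁆ := by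
      group
    rw [e]
    exact mul_mem (hMn.conj_mem _ ihy x) ihx
  | inv x hx ihx =>
    rw [I3]
    have e : (x : Chi G)⁻¹ * ⁅x, S a⁆⁻¹ * x = x⁻¹ * ⁅x, S a⁆⁻¹ * (x⁻¹)⁻¹ := by group
    rw [e]
    exact hMn.conj_mem _ (inv_mem ihx) _

lemma hR_le_D : chiR G ≤ chiD G := by
  haveI hDn := chiD_normal (G := G)
  refine Subgroup.commutator_le.mpr ?_
  intro m hm y hy
  obtain ⟨h, rfl⟩ := hy
  have hm' : m ∈ chiG1 G ⊔ chiD G := by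
    apply hL1_le_M
    rwa [chiL1, ← Subgroup.commutator_comm]
  -- the set of m such that ∀ h, ⁅m, T h⁆ ∈ D is a subgroup containing G1 and D
  let W2 : Subgroup (Chi G) :=
    { carrier := {m : Chi G | ∀ h : G, ⁅m, (T h : Chi G)⁆ ∈ chiD G}
      one_mem' := by intro h; rw [commutatorElement_one_left]; exact one_mem _
      mul_mem' := by
        intro x y hx hy h
        rw [I1]
        have e : (x : Chi G) * ⁅y, T h⁆ * x⁻¹ * ⁅x, T h⁆ = (x * ⁅y, T h⁆ * x⁻¹) * ⁅x, T h⁆ := by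
          group
        rw [e]
        exact mul_mem (hDn.conj_mem _ (hy h) x) (hx h)
      inv_mem' := by
        intro x hx h
        rw [I3]
        have e : (x : Chi G)⁻¹ * ⁅x, T h⁆⁻¹ * x = x⁻¹ * ⁅x, T h⁆⁻¹ * (x⁻¹)⁻¹ := by group
        rw [e]
        exact hDn.conj_mem _ (inv_mem (hx h)) _ }
  have hsup : chiG1 G ⊔ chiD G ≤ W2 := by
    refine sup_le ?_ ?_
    · rintro w ⟨a, rfl⟩ h
      exact Subgroup.commutator_mem_commutator (SmemG1 a) (TmemG2 h)
    · intro d hd h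
      have e : ⁅(d : Chi G), T h⁆ = d * (T h * d⁻¹ * (T h)⁻¹) := by
        simp only [commutatorElement_def]; group
      rw [e]
      exact mul_mem hd (by
        have := hDn.conj_mem _ (inv_mem hd) (T h : Chi G)
        exact this)
  exact hsup hm' h

lemma hRL : ∀ r ∈ chiR G, ∀ l ∈ chiL G, Commute r l :=
  fun r hr l hl => hDL r (hR_le_D hr) l hl

lemma hR_le_L1 : chiR G ≤ chiL1 G := by
  haveI := chiL1_normal (G := G)
  rw [chiR, ← Subgroup.commutator_comm (chiL G) (chiG1 G), ← chiL1]
  exact Subgroup.commutator_le_left _ _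

lemma hR_le_L2 : chiR G ≤ chiL2 G := by
  rw [chiR, ← Subgroup.commutator_comm (chiL G) (chiG1 G), ← chiL1, chiL2]
  exact Subgroup.commutator_mono chiL1_le_chiL le_rfl

lemma hR_le_L : chiR G ≤ chiL G := le_trans hR_le_L1 chiL1_le_chiL

end ChiAux
namespace ChiAux

variable {G : Type*} [Group G]

instance : (chiL G).Normal := chiL_normal
instance : (chiD G).Normal := chiD_normal
instance : (chiL1 G).Normal := chiL1_normal
instance : (chiL2 G).Normal := chiL2_normal
instance : (chiL12 G).Normal := chiL12_normal

lemma mem_R {l : Chi G} (hl : l ∈ chiL G) (a g : G) :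
    ⁅⁅l, (S a : Chi G)⁆, (T g : Chi G)⁆ ∈ chiR G := by
  refine Subgroup.commutator_mem_commutator ?_ (TmemG2 g)
  rw [Subgroup.commutator_comm]
  exact Subgroup.commutator_mem_commutator hl (SmemG1 a)

lemma mem_L1 {l : Chi G} (hl : l ∈ chiL G) (a : G) :
    ⁅l, (S a : Chi G)⁆ ∈ chiL1 G :=
  Subgroup.commutator_mem_commutator hl (SmemG1 a)

lemma mem_L2' {l : Chi G} (hl : l ∈ chiL G) (g : G) :
    ⁅(T g : Chi G)⁻¹, l⁻¹⁆ ∈ chiL2 G := by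
  rw [chiL2, Subgroup.commutator_comm]
  exact Subgroup.commutator_mem_commutator (inv_mem (TmemG2 g)) (inv_mem hl)

lemma tau_mul (a g : G) {l l' : Chi G} (hl : l ∈ chiL G) (hl' : l' ∈ chiL G) :
    (QuotientGroup.mk' (chiL12 G)) ⁅⁅l * l', (S a : Chi G)⁆, (T g : Chi G)⁆
      = (QuotientGroup.mk' (chiL12 G)) ⁅⁅l, (S a : Chi G)⁆, (T g : Chi G)⁆ *
        (QuotientGroup.mk' (chiL12 G)) ⁅⁅l', (S a : Chi G)⁆, (T g : Chi G)⁆ := by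
  set π := QuotientGroup.mk' (chiL12 G) with hπdef
  have hw' : ⁅l', (S a : Chi G)⁆ ∈ chiL1 G := mem_L1 hl' a
  have hxL : l * ⁅l', (S a : Chi G)⁆ * l⁻¹ ∈ chiL G :=
    mul_mem (mul_mem hl (chiL1_le_chiL hw')) (inv_mem hl)
  have hρ : ⁅⁅l, (S a : Chi G)⁆, (T g : Chi G)⁆ ∈ chiR G := mem_R hl a g
  have hρ' : ⁅⁅l', (S a : Chi G)⁆, (T g : Chi G)⁆ ∈ chiR G := mem_R hl' a g
  have hpL2 : ⁅(T g : Chi G)⁻¹, l⁻¹⁆ ∈ chiL2 G := mem_L2' hl g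
  have hnN : ⁅⁅l', (S a : Chi G)⁆, ⁅(T g : Chi G)⁻¹, l⁻¹⁆⁆ ∈ chiL12 G :=
    Subgroup.commutator_mem_commutator hw' hpL2
  have E : ⁅⁅l * l', (S a : Chi G)⁆, (T g : Chi G)⁆
      = ⁅⁅l, (S a : Chi G)⁆, (T g : Chi G)⁆ *
        (⁅⁅l', (S a : Chi G)⁆, (T g : Chi G)⁆ *
          ((l * T g) * ⁅⁅l', (S a : Chi G)⁆, ⁅(T g : Chi G)⁻¹, l⁻¹⁆⁆ * (l * T g)⁻¹)) := by
    calc ⁅⁅l * l', (S a : Chi G)⁆, (T g : Chi G)⁆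
        = ⁅(l * ⁅l', (S a : Chi G)⁆ * l⁻¹) * ⁅l, (S a : Chi G)⁆, (T g : Chi G)⁆ := by
          rw [I1 l l' (S a : Chi G)]
      _ = (l * ⁅l', (S a : Chi G)⁆ * l⁻¹) * ⁅⁅l, (S a : Chi G)⁆, (T g : Chi G)⁆ *
            (l * ⁅l', (S a : Chi G)⁆ * l⁻¹)⁻¹ *
            ⁅l * ⁅l', (S a : Chi G)⁆ * l⁻¹, (T g : Chi G)⁆ := by
          rw [I1]
      _ = ⁅⁅l, (S a : Chi G)⁆, (T g : Chi G)⁆ *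
            ⁅l * ⁅l', (S a : Chi G)⁆ * l⁻¹, (T g : Chi G)⁆ := by
          rw [conj_eq_of_commute' (hRL _ hρ _ hxL)]
      _ = ⁅⁅l, (S a : Chi G)⁆, (T g : Chi G)⁆ *
            (l * ⁅⁅l', (S a : Chi G)⁆, l⁻¹ * T g * l⁆ * l⁻¹) := by
          rw [I4]
      _ = ⁅⁅l, (S a : Chi G)⁆, (T g : Chi G)⁆ *
            (l * ⁅⁅l', (S a : Chi G)⁆, (T g : Chi G) * ⁅(T g : Chi G)⁻¹, l⁻¹⁆⁆ * l⁻¹) := by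
          rw [I5]
      _ = ⁅⁅l, (S a : Chi G)⁆, (T g : Chi G)⁆ *
            (l * (⁅⁅l', (S a : Chi G)⁆, (T g : Chi G)⁆ *
              ((T g : Chi G) * ⁅⁅l', (S a : Chi G)⁆, ⁅(T g : Chi G)⁻¹, l⁻¹⁆⁆ * (T g : Chi G)⁻¹))
              * l⁻¹) := by
          rw [I2]
      _ = ⁅⁅l, (S a : Chi G)⁆, (T g : Chi G)⁆ *
            ((l * ⁅⁅l', (S a : Chi G)⁆, (T g : Chi G)⁆ * l⁻¹) *
              ((l * T g) * ⁅⁅l', (S a : Chi G)⁆, ⁅(T g : Chi G)⁻¹, l⁻¹⁆⁆ * (l * T g)⁻¹)) := by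
          group
      _ = ⁅⁅l, (S a : Chi G)⁆, (T g : Chi G)⁆ *
            (⁅⁅l', (S a : Chi G)⁆, (T g : Chi G)⁆ *
              ((l * T g) * ⁅⁅l', (S a : Chi G)⁆, ⁅(T g : Chi G)⁻¹, l⁻¹⁆⁆ * (l * T g)⁻¹)) := by
          rw [conj_eq_of_commute' (hRL _ hρ' _ hl)]
  rw [E, map_mul, map_mul]
  have hker : π ((l * T g) * ⁅⁅l', (S a : Chi G)⁆, ⁅(T g : Chi G)⁻¹, l⁻¹⁆⁆ * (l * T g)⁻¹) = 1 := by
    rw [← MonoidHom.mem_ker, hπdef, QuotientGroup.ker_mk']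
    exact (chiL12_normal (G := G)).conj_mem _ hnN _
  rw [hker, mul_one]

lemma tau_one (a g : G) :
    (QuotientGroup.mk' (chiL12 G)) ⁅⁅(1 : Chi G), (S a : Chi G)⁆, (T g : Chi G)⁆ = 1 := by
  rw [commutatorElement_one_left, commutatorElement_one_left, map_one]

lemma tau_pow (a g : G) {l : Chi G} (hl : l ∈ chiL G) (n : ℕ) :
    (QuotientGroup.mk' (chiL12 G)) ⁅⁅l ^ n, (S a : Chi G)⁆, (T g : Chi G)⁆
      = ((QuotientGroup.mk' (chiL12 G)) ⁅⁅l, (S a : Chi G)⁆, (T g : Chi G)⁆) ^ n := by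
  induction n with
  | zero => rw [pow_zero, pow_zero]; exact tau_one a g
  | succ n ih =>
    rw [pow_succ, tau_mul a g (pow_mem hl n) hl, ih, pow_succ]

lemma tau_inv (a g : G) {l : Chi G} (hl : l ∈ chiL G) :
    (QuotientGroup.mk' (chiL12 G)) ⁅⁅l⁻¹, (S a : Chi G)⁆, (T g : Chi G)⁆
      = ((QuotientGroup.mk' (chiL12 G)) ⁅⁅l, (S a : Chi G)⁆, (T g : Chi G)⁆)⁻¹ := by
  have h := tau_mul a g hl (inv_mem hl)
  rw [mul_inv_cancel, tau_one] at h
  exact (eq_inv_of_mul_eq_one_right h.symm)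

end ChiAux

theorem chiR_mod_L12_exponent (G : Type*) [Group G] (e : ℕ) (he : 0 < e)
    (hG : ∀ g : G, g ^ e = 1) :
    ∀ x ∈ chiR G, x ^ e ∈ chiL12 G := by
  intro x hx
  set π := QuotientGroup.mk' (chiL12 G) with hπdef
  have hRcomm : ∀ q ∈ Subgroup.map π (chiR G), ∀ q' ∈ Subgroup.map π (chiR G), Commute q q' := by
    rintro q ⟨r, hr, rfl⟩ q' ⟨r', hr', rfl⟩
    exact (ChiAux.hRL r hr r' (ChiAux.hR_le_L hr')).map π
  let Tsub : Subgroup (Chi G ⧸ chiL12 G) :=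
    { carrier := {q | q ∈ Subgroup.map π (chiR G) ∧ q ^ e = 1}
      one_mem' := ⟨one_mem _, one_pow e⟩
      mul_mem' := by
        intro a b ha hb
        exact ⟨mul_mem ha.1 hb.1, by
          rw [(hRcomm a ha.1 b hb.1).mul_pow, ha.2, hb.2, one_mul]⟩
      inv_mem' := by
        intro a ha
        exact ⟨inv_mem ha.1, by rw [inv_pow, ha.2, inv_one]⟩ }
  have lvl2 : ∀ (a g : G), ∀ l ∈ chiL G,
      π ⁅⁅l, (ChiAux.S a : Chi G)⁆, (ChiAux.T g : Chi G)⁆ ∈ Tsub := by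
    intro a g l hl
    induction hl using Subgroup.closure_induction with
    | mem w hw =>
      obtain ⟨h, rfl⟩ := hw
      show π ⁅⁅(ChiAux.u h : Chi G), (ChiAux.S a : Chi G)⁆, (ChiAux.T g : Chi G)⁆ ∈ Tsub
      constructor
      · exact ⟨_, ChiAux.mem_R (ChiAux.u_mem h) a g, rfl⟩
      · have h1 : ((ChiAux.u h : Chi G)) ^ e = 1 := by
          rw [← ChiAux.u_pow, hG h, ChiAux.u_one]
        rw [← ChiAux.tau_pow a g (ChiAux.u_mem h) e, h1, ChiAux.tau_one]
    | one =>
      constructor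
      · rw [ChiAux.tau_one]; exact one_mem _
      · rw [ChiAux.tau_one, one_pow]
    | mul p q hp hq ihp ihq =>
      have := ChiAux.tau_mul a g (l := p) (l' := q) hp hq
      rw [show (QuotientGroup.mk' (chiL12 G)) = π from rfl] at this
      rw [this]
      exact mul_mem ihp ihq
    | inv p hp ihp =>
      have := ChiAux.tau_inv a g (l := p) hp
      rw [show (QuotientGroup.mk' (chiL12 G)) = π from rfl] at this
      rw [this]
      exact inv_mem ihp
  have lvl1 : ∀ (g : G), ∀ m ∈ chiL1 G, π ⁅m, (ChiAux.T g : Chi G)⁆ ∈ Tsub := by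
    intro g m hm
    rw [chiL1, Subgroup.commutator_def] at hm
    induction hm using Subgroup.closure_induction with
    | mem w hw =>
      obtain ⟨l, hl, s, hs, rfl⟩ := hw
      obtain ⟨a, rfl⟩ := hs
      exact lvl2 a g l hl
    | one =>
      rw [commutatorElement_one_left, map_one]
      exact one_mem _
    | mul p q hp hq ihp ihq =>
      have hpL1 : p ∈ chiL1 G := by rw [chiL1, Subgroup.commutator_def]; exact hp
      have hqL1 : q ∈ chiL1 G := by rw [chiL1, Subgroup.commutator_def]; exact hq
      have hρq : ⁅q, (ChiAux.T g : Chi G)⁆ ∈ chiR G := by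
        refine Subgroup.commutator_mem_commutator ?_ (ChiAux.TmemG2 g)
        rw [Subgroup.commutator_comm]
        exact hqL1
      have E : ⁅p * q, (ChiAux.T g : Chi G)⁆
          = ⁅q, (ChiAux.T g : Chi G)⁆ * ⁅p, (ChiAux.T g : Chi G)⁆ := by
        calc ⁅p * q, (ChiAux.T g : Chi G)⁆
            = p * ⁅q, (ChiAux.T g : Chi G)⁆ * p⁻¹ * ⁅p, (ChiAux.T g : Chi G)⁆ := ChiAux.I1 _ _ _
          _ = ⁅q, (ChiAux.T g : Chi G)⁆ * ⁅p, (ChiAux.T g : Chi G)⁆ := by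
              rw [ChiAux.conj_eq_of_commute' (ChiAux.hRL _ hρq _ (ChiAux.chiL1_le_chiL hpL1))]
      rw [E, map_mul]
      exact mul_mem ihq ihp
    | inv p hp ihp =>
      have hpL1 : p ∈ chiL1 G := by rw [chiL1, Subgroup.commutator_def]; exact hp
      have hρp : ⁅p, (ChiAux.T g : Chi G)⁆ ∈ chiR G := by
        refine Subgroup.commutator_mem_commutator ?_ (ChiAux.TmemG2 g)
        rw [Subgroup.commutator_comm]
        exact hpL1
      have E : ⁅p⁻¹, (ChiAux.T g : Chi G)⁆ = ⁅p, (ChiAux.T g : Chi G)⁆⁻¹ := by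
        calc ⁅p⁻¹, (ChiAux.T g : Chi G)⁆
            = p⁻¹ * ⁅p, (ChiAux.T g : Chi G)⁆⁻¹ * p := ChiAux.I3 _ _
          _ = ⁅p, (ChiAux.T g : Chi G)⁆⁻¹ := by
              exact ChiAux.conj_eq_of_commute
                ((ChiAux.hRL _ hρp _ (ChiAux.chiL1_le_chiL hpL1)).inv_left)
      rw [E, map_inv]
      exact inv_mem ihp
  have lvl0 : ∀ y ∈ chiR G, π y ∈ Tsub := by
    have : chiR G ≤ Subgroup.comap π Tsub := by
      rw [chiR]
      refine Subgroup.commutator_le.mpr ?_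
      intro m hm y hy
      obtain ⟨g, rfl⟩ := hy
      rw [Subgroup.mem_comap]
      refine lvl1 g m ?_
      rwa [chiL1, ← Subgroup.commutator_comm]
    intro y hy
    exact this hy
  have h1 : (π x) ^ e = 1 := (lvl0 x hx).2
  rw [← map_pow] at h1
  rw [← QuotientGroup.ker_mk' (chiL12 G), MonoidHom.mem_ker]
  exact h1
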